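/- (Poincaré Lemma in the plane.) Let M, N : ℝ² → ℝ be continuously differentiable functions satisfying ∂M/∂y (x,y) = ∂N/∂x (x,y) for all (x,y) ∈ ℝ². Then there exists a differentiable function F : ℝ² → ℝ with ∂F/∂x = M and ∂F/∂y = N everywhere; i.e., every closed 1-form on the simply connected domain ℝ² is exact (H¹_dR(ℝ²) = 0). -/

import Mathlib

open MeasureTheory intervalIntegral Metric Set
open scoped Interval

private lemma clm_apply_eq (φ : (ℝ × ℝ) →L[ℝ] ℝ) (v : ℝ × ℝ) :
    φ v = v.1 * φ (1, 0) + v.2 * φ (0, 1) := by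
  have hv : v = v.1 • ((1 : ℝ), (0 : ℝ)) + v.2 • ((0 : ℝ), (1 : ℝ)) := by
    ext <;> simp
  conv_lhs => rw [hv]
  rw [map_add, _root_.map_smul, _root_.map_smul]
  simp [smul_eq_mul]

/-- Poincaré Lemma in the plane: if `M, N : ℝ² → ℝ` are `C¹` and satisfy the
closedness condition `∂M/∂y = ∂N/∂x` everywhere, then there is a differentiable
`F : ℝ² → ℝ` with `∂F/∂x = M` and `∂F/∂y = N` everywhere; i.e. every closed
1-form on `ℝ²` is exact. -/
theorem stmt_10 (M N : ℝ × ℝ → ℝ)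
    (hM : ContDiff ℝ 1 M) (hN : ContDiff ℝ 1 N)
    (hclosed : ∀ p : ℝ × ℝ, fderiv ℝ M p (0, 1) = fderiv ℝ N p (1, 0)) :
    ∃ F : ℝ × ℝ → ℝ, ∀ p : ℝ × ℝ,
      ∃ F' : (ℝ × ℝ) →L[ℝ] ℝ,
        HasFDerivAt F F' p ∧ F' (1, 0) = M p ∧ F' (0, 1) = N p := by
  have hMd : Differentiable ℝ M := hM.differentiable one_ne_zero
  have hNd : Differentiable ℝ N := hN.differentiable one_ne_zero
  have hMc : Continuous M := hM.continuous
  have hNc : Continuous N := hN.continuous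
  have hM' : Continuous (fderiv ℝ M) := hM.continuous_fderiv one_ne_zero
  have hN' : Continuous (fderiv ℝ N) := hN.continuous_fderiv one_ne_zero
  set fst : (ℝ × ℝ) →L[ℝ] ℝ := ContinuousLinearMap.fst ℝ ℝ ℝ with hfst
  set snd : (ℝ × ℝ) →L[ℝ] ℝ := ContinuousLinearMap.snd ℝ ℝ ℝ with hsnd
  set g : ℝ → (ℝ × ℝ) → ℝ := fun t q => M (t • q) * q.1 + N (t • q) * q.2 with hg
  set g' : ℝ → (ℝ × ℝ) → (ℝ × ℝ) →L[ℝ] ℝ := fun t q =>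
    (M (t • q) • fst +
      q.1 • ((fderiv ℝ M (t • q)).comp (t • ContinuousLinearMap.id ℝ (ℝ × ℝ)))) +
    (N (t • q) • snd +
      q.2 • ((fderiv ℝ N (t • q)).comp (t • ContinuousLinearMap.id ℝ (ℝ × ℝ)))) with hg'
  have hsmul : ∀ (t : ℝ) (q : ℝ × ℝ),
      HasFDerivAt (fun x : ℝ × ℝ => t • x) (t • ContinuousLinearMap.id ℝ (ℝ × ℝ)) q := by
    intro t q
    have := (t • ContinuousLinearMap.id ℝ (ℝ × ℝ)).hasFDerivAt (x := q)
    exact this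
  have hgdiff : ∀ (t : ℝ) (q : ℝ × ℝ), HasFDerivAt (g t) (g' t q) q := by
    intro t q
    have h1 : HasFDerivAt (fun x : ℝ × ℝ => M (t • x))
        ((fderiv ℝ M (t • q)).comp (t • ContinuousLinearMap.id ℝ (ℝ × ℝ))) q :=
      (hMd (t • q)).hasFDerivAt.comp q (hsmul t q)
    have h2 : HasFDerivAt (fun x : ℝ × ℝ => N (t • x))
        ((fderiv ℝ N (t • q)).comp (t • ContinuousLinearMap.id ℝ (ℝ × ℝ))) q :=
      (hNd (t • q)).hasFDerivAt.comp q (hsmul t q)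
    exact (h1.mul (hasFDerivAt_fst (p := q))).add (h2.mul (hasFDerivAt_snd (p := q)))
  -- continuity of (t, q) ↦ g' t q
  have hs : Continuous (fun z : ℝ × (ℝ × ℝ) => z.1 • z.2) := continuous_fst.smul continuous_snd
  have hid : Continuous (fun z : ℝ × (ℝ × ℝ) => z.1 • ContinuousLinearMap.id ℝ (ℝ × ℝ)) :=
    continuous_fst.smul continuous_const
  have hΦ : Continuous (fun z : ℝ × (ℝ × ℝ) => g' z.1 z.2) := by
    refine Continuous.add (Continuous.add ?_ ?_) (Continuous.add ?_ ?_)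
    · exact (hMc.comp hs).smul continuous_const
    · exact (continuous_snd.fst).smul ((hM'.comp hs).clm_comp hid)
    · exact (hNc.comp hs).smul continuous_const
    · exact (continuous_snd.snd).smul ((hN'.comp hs).clm_comp hid)
  have hgc : Continuous (fun z : ℝ × (ℝ × ℝ) => g z.1 z.2) :=
    ((hMc.comp hs).mul continuous_snd.fst).add ((hNc.comp hs).mul continuous_snd.snd)
  refine ⟨fun q => ∫ t in (0:ℝ)..1, g t q, fun p => ?_⟩
  refine ⟨M p • fst + N p • snd, ?_, by simp [hfst, hsnd], by simp [hfst, hsnd]⟩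
  -- bound on the compact set [0,1] × closedBall p 1
  obtain ⟨C, hC⟩ := ((isCompact_Icc (a := (0:ℝ)) (b := 1)).prod
    (isCompact_closedBall p 1)).exists_bound_of_continuousOn hΦ.continuousOn
  have hg'p : Continuous (fun t => g' t p) :=
    hΦ.comp (continuous_id.prodMk continuous_const)
  have hg'int : IntervalIntegrable (fun t => g' t p) volume 0 1 :=
    hg'p.intervalIntegrable 0 1
  have key : HasFDerivAt (fun q => ∫ t in (0:ℝ)..1, g t q)
      (∫ t in (0:ℝ)..1, g' t p) p := by
    refine intervalIntegral.hasFDerivAt_integral_of_dominated_of_fderiv_le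
      (F := fun x t => g t x) (F' := fun x t => g' t x)
      (s := ball p 1) (bound := fun _ => C) (ball_mem_nhds p one_pos) ?_ ?_ ?_ ?_ ?_ ?_
    · exact Filter.Eventually.of_forall fun x =>
        ((hgc.comp (continuous_id.prodMk continuous_const)).aestronglyMeasurable).restrict
    · exact (hgc.comp (continuous_id.prodMk continuous_const)).intervalIntegrable 0 1
    · exact hg'p.aestronglyMeasurable.restrict
    · refine Filter.Eventually.of_forall fun t ht x hx => hC (t, x) ⟨?_, ball_subset_closedBall hx⟩
      have : t ∈ Set.Ioc (0:ℝ) 1 := by rwa [Set.uIoc_of_le (by norm_num : (0:ℝ) ≤ 1)] at ht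
      exact Set.Ioc_subset_Icc_self this
    · exact intervalIntegrable_const
    · exact Filter.Eventually.of_forall fun t ht x hx => hgdiff t x
  have hLeq : (∫ t in (0:ℝ)..1, g' t p) = M p • fst + N p • snd := by
    refine ContinuousLinearMap.ext fun v => ?_
    rw [ContinuousLinearMap.intervalIntegral_apply hg'int v]
    have hφ : ∀ t ∈ Set.uIcc (0:ℝ) 1,
        HasDerivAt (fun s => s * (M (s • p) * v.1 + N (s • p) * v.2)) ((g' t p) v) t := by
      intro t _
      have hline : HasDerivAt (fun s : ℝ => s • p) p t := by
        simpa using (hasDerivAt_id t).smul_const p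
      have hMt : HasDerivAt (fun s => M (s • p)) (fderiv ℝ M (t • p) p) t :=
        (hMd (t • p)).hasFDerivAt.comp_hasDerivAt t hline
      have hNt : HasDerivAt (fun s => N (s • p)) (fderiv ℝ N (t • p) p) t :=
        (hNd (t • p)).hasFDerivAt.comp_hasDerivAt t hline
      have h := (hasDerivAt_id t).mul ((hMt.mul_const v.1).add (hNt.mul_const v.2))
      convert h using 1
      · rfl
      · rfl
      · rfl
      have hsym := hclosed (t • p)
      have e1 := clm_apply_eq (fderiv ℝ M (t • p)) v
      have e2 := clm_apply_eq (fderiv ℝ N (t • p)) v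
      have e3 := clm_apply_eq (fderiv ℝ M (t • p)) p
      have e4 := clm_apply_eq (fderiv ℝ N (t • p)) p
      simp only [hg', ContinuousLinearMap.add_apply, ContinuousLinearMap.smul_apply,
        ContinuousLinearMap.coe_comp', Function.comp_apply, ContinuousLinearMap.id_apply,
        hfst, hsnd, ContinuousLinearMap.coe_fst', ContinuousLinearMap.coe_snd',
        _root_.map_smul, smul_eq_mul, id_eq, Pi.add_apply]
      rw [e1, e2, e3, e4, hsym]
      ring
    have hψint : IntervalIntegrable (fun t => (g' t p) v) volume 0 1 :=
      (hg'p.clm_apply continuous_const).intervalIntegrable 0 1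
    rw [intervalIntegral.integral_eq_sub_of_hasDerivAt hφ hψint]
    simp [hfst, hsnd]
  rwa [hLeq] at key
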